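/- Let S be an open square in the complex plane with center 0 and side length 1 (diameter √2). For any two distinct points z, z' in S, let Γ be the open disk centered at z passing through z' (i.e., of radius |z−z'|). Then there exists an open disk Γ' of radius at least (1/5)·|z−z'| contained in Γ ∩ S. -/

import Mathlib

/-- The open unit square centered at 0 in ℂ. -/
def unitSquare : Set ℂ := {z : ℂ | |z.re| < 1/2 ∧ |z.im| < 1/2}

lemma key_incl (z c : ℂ) (d : ℝ) (h1 : |c.re| ≤ 1/2 - d/5) (h2 : |c.im| ≤ 1/2 - d/5)
    (h3 : ‖c - z‖ + d/5 ≤ d) :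
    Metric.ball c (d/5) ⊆ Metric.ball z d ∩ unitSquare := by
  intro w hw
  rw [Metric.mem_ball, Complex.dist_eq] at hw
  have hre : |w.re - c.re| ≤ ‖w - c‖ := by
    simpa using Complex.abs_re_le_norm (w - c)
  have him : |w.im - c.im| ≤ ‖w - c‖ := by
    simpa using Complex.abs_im_le_norm (w - c)
  have hre2 : |w.re| ≤ |w.re - c.re| + |c.re| := by
    simpa using abs_add_le (w.re - c.re) c.re
  have him2 : |w.im| ≤ |w.im - c.im| + |c.im| := by
    simpa using abs_add_le (w.im - c.im) c.im
  refine ⟨?_, ?_, ?_⟩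
  · rw [Metric.mem_ball, Complex.dist_eq]
    have htri : ‖w - z‖ ≤ ‖w - c‖ + ‖c - z‖ := by
      simpa using norm_add_le (w - c) (c - z)
    linarith
  · linarith
  · linarith

/-- For distinct points `z, z'` of the unit square, the disk centered at `z` through `z'`
meets the square in a disk of radius at least `|z - z'| / 5`. -/
theorem disk_in_square_inter (z z' : ℂ) (hz : z ∈ unitSquare) (hz' : z' ∈ unitSquare)
    (hne : z ≠ z') :
    ∃ (c : ℂ) (r : ℝ), (1/5) * ‖z - z'‖ ≤ r ∧
      Metric.ball c r ⊆ Metric.ball z (‖z - z'‖) ∩ unitSquare := by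
  obtain ⟨hzr, hzi⟩ := hz
  obtain ⟨hzr', hzi'⟩ := hz'
  set d := ‖z - z'‖ with hdDef
  have hd0 : 0 < d := norm_pos_iff.mpr (sub_ne_zero.mpr hne)
  have hzabs : ‖z‖ ≤ |z.re| + |z.im| := Complex.norm_le_abs_re_add_abs_im z
  have hz'abs : ‖z'‖ ≤ |z'.re| + |z'.im| := Complex.norm_le_abs_re_add_abs_im z'
  have hd2 : d < 2 := by
    have h : d ≤  ‖z‖ + ‖z'‖ := by simpa [Complex.dist_eq] using dist_le_norm_add_norm z z'
    linarith
  set M := max |z.re| |z.im| with hMdef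
  have hM2 : M < 1/2 := max_lt hzr hzi
  have hM0 : 0 ≤ M := le_trans (abs_nonneg _) (le_max_left _ _)
  have hxM : |z.re| ≤ M := le_max_left _ _
  have hyM : |z.im| ≤ M := le_max_right _ _
  by_cases hcase : d/5 ≤ 1/2 - M
  · refine ⟨z, d/5, by linarith, key_incl z z d ?_ ?_ ?_⟩
    · linarith
    · linarith
    · simp only [sub_self, norm_zero]; linarith
  · push_neg at hcase
    have hMpos : 0 < M := by linarith
    set s : ℝ := (d/5 - (1/2 - M)) / M with hsDef
    have hs0 : 0 ≤ s := div_nonneg (by linarith) hM0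
    have hsM : s * M = d/5 - (1/2 - M) := by
      rw [hsDef, div_mul_cancel₀ _ hMpos.ne']
    have hs1 : s ≤ 1 := by
      rw [div_le_one hMpos]; linarith
    refine ⟨((1 - s : ℝ) : ℂ) * z, d/5, by linarith, key_incl z _ d ?_ ?_ ?_⟩
    · have : (((1 - s : ℝ) : ℂ) * z).re = (1 - s) * z.re := by
        simp [Complex.re_ofReal_mul]
      rw [this, abs_mul, abs_of_nonneg (by linarith : (0:ℝ) ≤ 1 - s)]
      nlinarith
    · have : (((1 - s : ℝ) : ℂ) * z).im = (1 - s) * z.im := by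
        simp [Complex.im_ofReal_mul]
      rw [this, abs_mul, abs_of_nonneg (by linarith : (0:ℝ) ≤ 1 - s)]
      nlinarith
    · have hceq : ((1 - s : ℝ) : ℂ) * z - z = ((-s : ℝ) : ℂ) * z := by
        push_cast; ring
      rw [hceq, norm_mul, Complex.norm_real, Real.norm_eq_abs, abs_neg, abs_of_nonneg hs0]
      have h1 : s * ‖z‖ ≤ s * (2 * M) := by nlinarith
      nlinarith
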